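/- Let A be a unital C*-algebra and let x ∈ A be invertible. Then there exist a unitary U ∈ M₂(A) and elements y, z ∈ A such that U* [[2, x],[0, 0]] U = [[1, y],[z, 1]]. -/

import Mathlib

noncomputable def myF (l : ℝ) : ℝ := Real.sqrt ((1 - Real.sqrt (l / (l + 4))) / 2)
noncomputable def myG (l : ℝ) : ℝ := Real.sqrt ((1 + Real.sqrt (l / (l + 4))) / 2)

lemma myKey (l : ℝ) (hl : 0 < l) :
    myF l * myF l + myG l * myG l = 1 ∧
    2 * (myF l * myF l) + Real.sqrt l * (myF l * myG l) = 1 ∧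
    2 * (myG l * myG l) - Real.sqrt l * (myF l * myG l) = 1 := by
  have h4 : (0:ℝ) < l + 4 := by linarith
  set u := Real.sqrt (l / (l + 4)) with hu
  have hdn : 0 ≤ l / (l + 4) := by positivity
  have hd1 : l / (l + 4) ≤ 1 := (div_le_one h4).mpr (by linarith)
  have hu0 : 0 ≤ u := Real.sqrt_nonneg _
  have hu1 : u ≤ 1 := Real.sqrt_le_one.mpr hd1
  have huu : u * u = l / (l + 4) := Real.mul_self_sqrt hdn
  have hFF : myF l * myF l = (1 - u) / 2 := Real.mul_self_sqrt (by linarith)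
  have hGG : myG l * myG l = (1 + u) / 2 := Real.mul_self_sqrt (by linarith)
  have hFG : myF l * myG l = (Real.sqrt (l + 4))⁻¹ := by
    rw [myF, myG, ← hu, ← Real.sqrt_mul (by linarith)]
    have huu' : u * u * (l + 4) = l := by rw [huu]; field_simp
    have : (1 - u) / 2 * ((1 + u) / 2) = (l + 4)⁻¹ := by
      field_simp
      linear_combination -huu'
    rw [this, Real.sqrt_inv]
  have hsFG : Real.sqrt l * (myF l * myG l) = u := by
    rw [hFG, hu, Real.sqrt_div hl.le, div_eq_mul_inv]
  refine ⟨by linarith, by rw [hFF, hsFG]; ring, by rw [hGG, hsFG]; ring⟩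

lemma star_fin_two {A : Type*} [NonUnitalSemiring A] [StarRing A] (a b c d : A) :
    star !![a, b; c, d] = !![star a, star c; star b, star d] := by
  ext i j
  fin_cases i <;> fin_cases j <;> simp [Matrix.conjTranspose_apply]

set_option maxHeartbeats 1000000

lemma mat2_congr {A : Type*} {a b c d a' b' c' d' : A}
    (h1 : a = a') (h2 : b = b') (h3 : c = c') (h4 : d = d') :
    !![a, b; c, d] = !![a', b'; c', d'] := by rw [h1, h2, h3, h4]

/-- For an invertible `x` in a unital C*-algebra `A`, there exist a unitary `U ∈ M₂(A)` and
elements `y, z ∈ A` with `U* [[2,x],[0,0]] U = [[1,y],[z,1]]`. -/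
theorem stmt_6 {A : Type*} [CStarAlgebra A] (x : A) (hx : IsUnit x) :
    ∃ U : Matrix (Fin 2) (Fin 2) A, ∃ y z : A,
      U * star U = 1 ∧ star U * U = 1 ∧
      star U * !![(2 : A), x; 0, 0] * U = !![1, y; z, 1] := by
  obtain ⟨xi, hxi1, hxi2⟩ := isUnit_iff_exists.mp hx
  set p := x * star x with hp_def
  have hp_sa : IsSelfAdjoint p := IsSelfAdjoint.mul_star_self x
  have hp_unit : IsUnit p := hx.mul hx.star
  have hS : spectrum ℝ p ⊆ Set.Ioi (0:ℝ) := by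
    intro t ht
    have h0 : 0 ≤ t := by
      have := spectrum_star_mul_self_nonneg (b := star x) (A := A)
      rw [star_star] at this
      exact this t ht
    rcases h0.lt_or_eq with h | h
    · exact h
    · exact absurd (h ▸ ht) (spectrum.zero_notMem ℝ hp_unit)
  -- continuity facts
  have c4 : ∀ l ∈ Set.Ioi (0:ℝ), l + 4 ≠ 0 := fun l hl => by
    simp only [Set.mem_Ioi] at hl; linarith
  have cdiv : ContinuousOn (fun l : ℝ => l / (l + 4)) (Set.Ioi 0) :=
    ContinuousOn.div (by fun_prop) (by fun_prop) c4
  have cF : ContinuousOn myF (Set.Ioi 0) := by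
    unfold myF; fun_prop (disch := assumption)
  have cG : ContinuousOn myG (Set.Ioi 0) := by
    unfold myG; fun_prop (disch := assumption)
  have cR : ContinuousOn Real.sqrt (Set.Ioi 0) := Real.continuous_sqrt.continuousOn
  have cI : ContinuousOn (fun l : ℝ => (Real.sqrt l)⁻¹) (Set.Ioi 0) := by
    refine ContinuousOn.inv₀ cR fun l hl => ?_
    simp only [Set.mem_Ioi] at hl
    exact (Real.sqrt_pos.mpr hl).ne'
  -- elements via cfc
  set f := cfc myF p with hf_def
  set g := cfc myG p with hg_def
  set r := cfc Real.sqrt p with hr_def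
  set w := cfc (fun l : ℝ => (Real.sqrt l)⁻¹) p with hw_def
  have Hmul : ∀ φ ψ : ℝ → ℝ, ContinuousOn φ (Set.Ioi 0) → ContinuousOn ψ (Set.Ioi 0) →
      cfc φ p * cfc ψ p = cfc (fun l => φ l * ψ l) p := fun φ ψ hφ hψ =>
    (cfc_mul φ ψ p (hφ.mono hS) (hψ.mono hS)).symm
  have Hadd : ∀ φ ψ : ℝ → ℝ, ContinuousOn φ (Set.Ioi 0) → ContinuousOn ψ (Set.Ioi 0) →
      cfc φ p + cfc ψ p = cfc (fun l => φ l + ψ l) p := fun φ ψ hφ hψ =>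
    (cfc_add (a := p) φ ψ (hφ.mono hS) (hψ.mono hS)).symm
  have Hsub : ∀ φ ψ : ℝ → ℝ, ContinuousOn φ (Set.Ioi 0) → ContinuousOn ψ (Set.Ioi 0) →
      cfc φ p - cfc ψ p = cfc (fun l => φ l - ψ l) p := fun φ ψ hφ hψ =>
    (cfc_sub φ ψ p (hφ.mono hS) (hψ.mono hS)).symm
  have Hone : ∀ φ : ℝ → ℝ, (∀ l ∈ Set.Ioi (0:ℝ), φ l = 1) → cfc φ p = 1 := by
    intro φ hφ
    rw [← cfc_one (R := ℝ) p hp_sa]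
    exact cfc_congr fun l hl => hφ l (hS hl)
  -- selfadjointness
  have hsf : star f = f := (cfc_predicate myF p).star_eq
  have hsg : star g = g := (cfc_predicate myG p).star_eq
  have hsw : star w = w := IsSelfAdjoint.star_eq (cfc_predicate (fun l : ℝ => (Real.sqrt l)⁻¹) p)
  -- basic cfc identities
  have hwr : w * r = 1 := by
    rw [hr_def, hw_def, Hmul _ _ cI cR]
    exact Hone _ fun l hl => inv_mul_cancel₀ (Real.sqrt_pos.mpr hl).ne'
  have hpw : p * w = r := by
    conv_lhs => rw [← cfc_id ℝ p hp_sa]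
    rw [hw_def, Hmul _ _ continuous_id.continuousOn cI, hr_def]
    refine cfc_congr fun l hl => ?_
    have hl' := hS hl
    simp only [Set.mem_Ioi] at hl'
    have hs := (Real.sqrt_pos.mpr hl').ne'
    show l * (Real.sqrt l)⁻¹ = Real.sqrt l
    field_simp
    exact (Real.sq_sqrt hl'.le).symm
  have hwwp : (w * w) * p = 1 := by
    conv_lhs => rw [← cfc_id ℝ p hp_sa]
    rw [hw_def, Hmul _ _ cI cI, Hmul _ _ (cI.fun_mul cI) continuous_id.continuousOn]
    refine Hone _ fun l hl => ?_
    simp only [Set.mem_Ioi] at hl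
    have hs := (Real.sqrt_pos.mpr hl).ne'
    show (Real.sqrt l)⁻¹ * (Real.sqrt l)⁻¹ * l = 1
    field_simp
    exact (Real.sq_sqrt hl.le).symm
  -- v and its properties
  set v := w * x with hv_def
  have hsv : star v = star x * w := by rw [hv_def, star_mul, hsw]
  have hvv : v * star v = 1 := by
    rw [hv_def, hsv]
    calc w * x * (star x * w) = w * (x * star x) * w := by noncomm_ring
    _ = w * (p * w) := by rw [← hp_def]; noncomm_ring
    _ = 1 := by rw [hpw, hwr]
  have hxxi : star x * star xi = 1 := by rw [← star_mul, hxi2, star_one]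
  have hsvv : star v * v = 1 := by
    have hpq : p * (star xi * xi) = 1 := by
      rw [hp_def]
      calc x * star x * (star xi * xi) = x * (star x * star xi) * xi := by noncomm_ring
      _ = x * xi := by rw [hxxi, mul_one]
      _ = 1 := hxi1
    have hq_eq : w * w = star xi * xi := by
      calc w * w = (w * w) * (p * (star xi * xi)) := by rw [hpq, mul_one]
      _ = ((w * w) * p) * (star xi * xi) := by noncomm_ring
      _ = star xi * xi := by rw [hwwp, one_mul]
    rw [hsv, hv_def]
    calc star x * w * (w * x) = star x * (w * w) * x := by noncomm_ring
    _ = star x * (star xi * xi) * x := by rw [hq_eq]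
    _ = (star x * star xi) * (xi * x) := by noncomm_ring
    _ = 1 := by rw [hxxi, hxi2, one_mul]
  have hxsv : x * star v = r := by
    rw [hsv]
    calc x * (star x * w) = p * w := by rw [hp_def]; noncomm_ring
    _ = r := hpw
  -- key algebraic identities among f, g, r
  have hff : f * f = cfc (fun l => myF l * myF l) p := Hmul _ _ cF cF
  have hgg : g * g = cfc (fun l => myG l * myG l) p := Hmul _ _ cG cG
  have hfrg : f * (r * g) = cfc (fun l => myF l * (Real.sqrt l * myG l)) p := by
    rw [hr_def, hg_def, Hmul _ _ cR cG, hf_def, Hmul _ _ cF (cR.fun_mul cG)]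
  have hgrf : g * (r * f) = cfc (fun l => myG l * (Real.sqrt l * myF l)) p := by
    rw [hr_def, hf_def, Hmul _ _ cR cF, hg_def, Hmul _ _ cG (cR.fun_mul cF)]
  have K1 : f * f + g * g = 1 := by
    rw [hff, hgg, Hadd _ _ (cF.fun_mul cF) (cG.fun_mul cG)]
    exact Hone _ fun l hl => (myKey l hl).1
  have K2 : f * g = g * f := by
    rw [hf_def, hg_def, Hmul _ _ cF cG, Hmul _ _ cG cF]
    exact cfc_congr fun l _ => mul_comm _ _
  have K4 : f * f + f * f + f * (r * g) = 1 := by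
    rw [hff, hfrg, Hadd _ _ (cF.fun_mul cF) (cF.fun_mul cF),
      Hadd _ _ ((cF.fun_mul cF).fun_add (cF.fun_mul cF)) (cF.fun_mul (cR.fun_mul cG))]
    refine Hone _ fun l hl => ?_
    have h := (myKey l hl).2.1
    linear_combination h
  have K5 : g * g + g * g - g * (r * f) = 1 := by
    rw [hgg, hgrf, Hadd _ _ (cG.fun_mul cG) (cG.fun_mul cG),
      Hsub _ _ ((cG.fun_mul cG).fun_add (cG.fun_mul cG)) (cG.fun_mul (cR.fun_mul cF))]
    refine Hone _ fun l hl => ?_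
    have h := (myKey l hl).2.2
    linear_combination h
  -- the unitary
  refine ⟨!![f, -g; star v * g, star v * f],
    f * 2 * -g + f * x * (star v * f), -g * 2 * f + -g * x * (star v * g), ?_, ?_, ?_⟩
  · rw [star_fin_two, Matrix.mul_fin_two, Matrix.one_fin_two]
    simp only [star_neg, hsf, hsg, star_mul, star_star]
    refine mat2_congr ?_ ?_ ?_ ?_
    · rw [neg_mul_neg]; exact K1
    · rw [show f * (g * v) + -g * (f * v) = (f * g) * v - (g * f) * v from by noncomm_ring,
        K2, sub_self]
    · rw [show star v * g * f + star v * f * -g = star v * (g * f) - star v * (f * g) from by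
        noncomm_ring, K2, sub_self]
    · calc star v * g * (g * v) + star v * f * (f * v)
          = star v * (f * f + g * g) * v := by noncomm_ring
      _ = star v * v := by rw [K1, mul_one]
      _ = 1 := hsvv
  · rw [star_fin_two, Matrix.mul_fin_two, Matrix.one_fin_two]
    simp only [star_neg, hsf, hsg, star_mul, star_star]
    refine mat2_congr ?_ ?_ ?_ ?_
    · calc f * f + g * v * (star v * g) = f * f + g * (v * star v) * g := by noncomm_ring
      _ = f * f + g * g := by rw [hvv, mul_one]
      _ = 1 := K1
    · calc f * -g + g * v * (star v * f) = -(f * g) + g * (v * star v) * f := by noncomm_ring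
      _ = -(g * f) + g * f := by rw [K2, hvv, mul_one]
      _ = 0 := neg_add_cancel _
    · calc -g * f + f * v * (star v * g) = -(g * f) + f * (v * star v) * g := by noncomm_ring
      _ = -(f * g) + f * g := by rw [← K2, hvv, mul_one]
      _ = 0 := neg_add_cancel _
    · calc -g * -g + f * v * (star v * f) = g * g + f * (v * star v) * f := by noncomm_ring
      _ = f * f + g * g := by rw [hvv, mul_one, add_comm]
      _ = 1 := K1
  · rw [star_fin_two, Matrix.mul_fin_two, Matrix.mul_fin_two]
    simp only [star_neg, hsf, hsg, star_mul, star_star, mul_zero, add_zero]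
    refine mat2_congr ?_ rfl rfl ?_
    · rw [mul_assoc f x (star v * g), ← mul_assoc x (star v) g, ← mul_assoc f (x * star v) g,
        hxsv]
      calc f * 2 * f + f * r * g = f * f + f * f + f * (r * g) := by noncomm_ring
      _ = 1 := K4
    · rw [mul_assoc (-g) x (star v * f), ← mul_assoc x (star v) f, ← mul_assoc (-g) (x * star v) f,
        hxsv]
      rw [show -g * 2 * -g + -g * r * f = g * 2 * g - g * r * f from by noncomm_ring]
      calc g * 2 * g - g * r * f = g * g + g * g - g * (r * f) := by noncomm_ring
      _ = 1 := K5
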